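/- arXiv:2112.01893 — 3 statements merged into one kernel-verified Lean document; each statement's English description precedes it below -/
import Mathlib

section
/- Let 𝕎 be the space of (a.e.-equivalence classes of) Lebesgue-integrable functions w : ℝ → ℝ vanishing a.e. on (−∞,0); for λ > 0 and H ∈ ℝ let φ_{λ,H} : 𝕎 → 𝕎 be the map (φ_{λ,H} w)(t) := λ^{H−1} w(t/λ). Let γ > 0, H ∈ ℝ, and let ν be a σ-finite Borel measure on 𝕎 which is (γ,H)-scaling, i.e. λ^{1+γ} ν(φ_{λ,H}(A)) = ν(A) for every λ > 0 and Borel A ⊆ 𝕎. Then for every x > 0, ∫_{ℝ×𝕎} ( ∫_0^x w(t−u) dt )² du ν(dw) = x^{2H−γ} · ∫_{ℝ×𝕎} ( ∫_0^1 w(t−u) dt )² du ν(dw), as an equality in [0,∞]. -/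
open MeasureTheory Filter Set
open scoped ENNReal Topology

noncomputable section

/-- Borel σ-algebra on `L¹(ℝ)`. -/
instance : MeasurableSpace (Lp ℝ 1 (volume : Measure ℝ)) := borel _

/-- `𝕎`: the space of (a.e.-equivalence classes of) Lebesgue-integrable functions
`ℝ → ℝ` vanishing a.e. on `(-∞, 0)`, with the Borel σ-algebra inherited from `L¹(ℝ)`. -/
abbrev WW : Type :=
  {w : Lp ℝ 1 (volume : Measure ℝ) // ∀ᵐ t ∂(volume : Measure ℝ), t < 0 → w t = 0}

/-- The scaling map `φ_{λ,H} w (t) = λ^{H-1} w(t/λ)` on `𝕎`. -/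
noncomputable def phi (lam H : ℝ) (w : WW) : WW := by
  classical
  exact if h : MemLp (fun t => lam ^ (H - 1) * (w.1 : ℝ → ℝ) (t / lam)) 1 (volume : Measure ℝ) ∧
      ∀ᵐ t ∂(volume : Measure ℝ), t < 0 → lam ^ (H - 1) * (w.1 : ℝ → ℝ) (t / lam) = 0
  then ⟨h.1.toLp _, by
    filter_upwards [h.1.coeFn_toLp, h.2] with t h1 h2 ht
    rw [h1]; exact h2 ht⟩
  else ⟨0, by
    filter_upwards [Lp.coeFn_zero ℝ 1 (volume : Measure ℝ)] with t h1 _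
    simp [h1]⟩

/-- `ν` is a `(γ,H)`-scaling measure on `𝕎`:
`λ^{1+γ} ν(φ_{λ,H}(A)) = ν(A)` for every `λ > 0` and Borel `A`. -/
def ScalingMeasure (ν : Measure WW) (γ H : ℝ) : Prop :=
  ∀ lam : ℝ, 0 < lam → ∀ A : Set WW, MeasurableSet A →
    ENNReal.ofReal (lam ^ (1 + γ)) * ν (phi lam H '' A) = ν A

/-- `𝒲(w) = ∫_0^∞ w(t) dt`. -/
noncomputable def Wcal (w : WW) : ℝ := ∫ t in Set.Ioi (0:ℝ), (w.1 : ℝ → ℝ) t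

/-- `Ψ(z) = e^{iz} - 1 - iz`. -/
noncomputable def Psi (z : ℝ) : ℂ := Complex.exp ((z:ℂ) * Complex.I) - 1 - (z:ℂ) * Complex.I

end

noncomputable section Aux13
namespace Stmt13

instance : BorelSpace (Lp ℝ 1 (volume : Measure ℝ)) := ⟨rfl⟩

theorem qmp_div {lam : ℝ} (hlam : lam ≠ 0) :
    Measure.QuasiMeasurePreserving (fun t : ℝ => t / lam) volume volume := by
  refine ⟨measurable_id.div_const lam, ?_⟩
  have h1 : (fun t : ℝ => t / lam) = fun t => lam⁻¹ * t := by
    funext t; rw [div_eq_inv_mul]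
  rw [h1, Real.map_volume_mul_left (inv_ne_zero hlam)]
  exact Measure.AbsolutelyContinuous.rfl.smul_left _

theorem ae_div {lam : ℝ} (hlam : lam ≠ 0) {p : ℝ → Prop}
    (h : ∀ᵐ s : ℝ, p s) : ∀ᵐ t : ℝ, p (t / lam) :=
  (qmp_div hlam).tendsto_ae.eventually h

theorem ae_sub (u : ℝ) {p : ℝ → Prop} (h : ∀ᵐ s : ℝ, p s) : ∀ᵐ t : ℝ, p (t - u) := by
  have hq : Measure.QuasiMeasurePreserving (fun t : ℝ => t - u) volume volume := by
    refine ⟨measurable_sub_const u, ?_⟩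
    have h1 : (fun t : ℝ => t - u) = fun t => t + (-u) := by funext t; ring
    rw [h1, map_add_right_eq_self volume (-u)]
  exact hq.tendsto_ae.eventually h

theorem lintegral_div_scale {lam : ℝ} (hlam : lam ≠ 0) (g : ℝ → ℝ≥0∞) :
    ∫⁻ t : ℝ, g (t / lam) = ENNReal.ofReal |lam| * ∫⁻ t, g t := by
  have h0 : ∫⁻ t : ℝ, g (t / lam) = ∫⁻ t : ℝ, g (lam⁻¹ * t) := by
    simp_rw [div_eq_inv_mul]
  have h1 := MeasureTheory.lintegral_map_equiv (μ := (volume : Measure ℝ)) g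
    (MeasurableEquiv.mulLeft₀ lam⁻¹ (inv_ne_zero hlam))
  simp only [MeasurableEquiv.coe_mulLeft₀] at h1
  have h2 : Measure.map (fun x : ℝ => lam⁻¹ * x) (volume : Measure ℝ)
      = ENNReal.ofReal |lam| • volume := by
    rw [show ((fun x : ℝ => lam⁻¹ * x)) = ((lam⁻¹ * ·) : ℝ → ℝ) from rfl]
    rw [Real.map_volume_mul_left (inv_ne_zero hlam), inv_inv]
  rw [h0, ← h1, h2, lintegral_smul_measure, smul_eq_mul]

theorem memLp_scale {lam : ℝ} (hlam : lam ≠ 0) (c : ℝ) (v : Lp ℝ 1 (volume : Measure ℝ)) :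
    MemLp (fun t => c * (v : ℝ → ℝ) (t / lam)) 1 (volume : Measure ℝ) := by
  constructor
  · exact ((Lp.aestronglyMeasurable v).comp_quasiMeasurePreserving (qmp_div hlam)).const_mul c
  · rw [eLpNorm_one_eq_lintegral_enorm]; simp_rw [enorm_eq_nnnorm]
    have h1 : ∀ t : ℝ, (‖c * (v : ℝ → ℝ) (t / lam)‖₊ : ℝ≥0∞)
        = (‖c‖₊ : ℝ≥0∞) * (fun s => (‖(v : ℝ → ℝ) s‖₊ : ℝ≥0∞)) (t / lam) := by
      intro t; simp [nnnorm_mul]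
    simp_rw [h1]
    rw [lintegral_const_mul' _ _ ENNReal.coe_ne_top,
      lintegral_div_scale hlam (fun s => (‖(v : ℝ → ℝ) s‖₊ : ℝ≥0∞))]
    have hv := (Lp.memLp v).2
    rw [eLpNorm_one_eq_lintegral_enorm] at hv; simp_rw [enorm_eq_nnnorm] at hv
    exact ENNReal.mul_lt_top ENNReal.coe_lt_top
      (ENNReal.mul_lt_top ENNReal.ofReal_lt_top hv)

end Stmt13
end Aux13

noncomputable section Aux14
namespace Stmt13

theorem phi_cond {lam : ℝ} (hlam : 0 < lam) (H : ℝ) (w : WW) :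
    MemLp (fun t => lam ^ (H - 1) * (w.1 : ℝ → ℝ) (t / lam)) 1 (volume : Measure ℝ) ∧
      ∀ᵐ t ∂(volume : Measure ℝ), t < 0 → lam ^ (H - 1) * (w.1 : ℝ → ℝ) (t / lam) = 0 := by
  refine ⟨memLp_scale hlam.ne' _ _, ?_⟩
  filter_upwards [ae_div hlam.ne' w.2] with t ht htlt
  rw [ht (div_neg_of_neg_of_pos htlt hlam), mul_zero]

theorem phi_coeFn {lam : ℝ} (hlam : 0 < lam) (H : ℝ) (w : WW) :
    (((phi lam H w).1 : ℝ → ℝ)) =ᵐ[(volume : Measure ℝ)]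
      fun t => lam ^ (H - 1) * (w.1 : ℝ → ℝ) (t / lam) := by
  have h := phi_cond hlam H w
  unfold phi
  rw [dif_pos h]
  exact h.1.coeFn_toLp

theorem phi_comp {lam : ℝ} (hlam : 0 < lam) (H : ℝ) (w : WW) :
    phi lam H (phi lam⁻¹ H w) = w := by
  have h1 := phi_coeFn (inv_pos.2 hlam) H w
  have h2 := phi_coeFn hlam H (phi lam⁻¹ H w)
  apply Subtype.ext
  apply Lp.ext (μ := (volume : Measure ℝ))
  refine h2.trans ?_
  have h3 : ∀ᵐ t : ℝ ∂(volume : Measure ℝ),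
      ((phi lam⁻¹ H w).1 : ℝ → ℝ) (t / lam)
        = lam⁻¹ ^ (H - 1) * (w.1 : ℝ → ℝ) ((t / lam) / lam⁻¹) :=
    ae_div hlam.ne' h1
  filter_upwards [h3] with t ht
  rw [ht]
  have h4 : t / lam / lam⁻¹ = t := by field_simp
  have h5 : lam ^ (H - 1) * lam⁻¹ ^ (H - 1) = 1 := by
    rw [← Real.mul_rpow hlam.le (inv_nonneg.2 hlam.le), mul_inv_cancel₀ hlam.ne',
      Real.one_rpow]
  rw [h4, ← mul_assoc, h5, one_mul]

theorem measurable_phi {lam : ℝ} (hlam : 0 < lam) (H : ℝ) : Measurable (phi lam H) := by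
  set c := lam ^ (H - 1) with hc
  have hF : ∀ v : Lp ℝ 1 (volume : Measure ℝ),
      MemLp (fun t => c * (v : ℝ → ℝ) (t / lam)) 1 (volume : Measure ℝ) :=
    fun v => memLp_scale hlam.ne' c v
  set F : Lp ℝ 1 (volume : Measure ℝ) → Lp ℝ 1 (volume : Measure ℝ) :=
    fun v => (hF v).toLp _ with hFdef
  have hlip : LipschitzWith (‖c‖₊ * ‖lam‖₊) F := by
    intro v v'
    rw [Lp.edist_def, Lp.edist_def]
    have hco : (⇑(F v) - ⇑(F v')) =ᵐ[(volume : Measure ℝ)]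
        fun t => c * ((⇑v - ⇑v') (t / lam)) := by
      filter_upwards [(hF v).coeFn_toLp, (hF v').coeFn_toLp] with t h1 h2
      simp only [Pi.sub_apply, F] at h1 h2 ⊢
      rw [h1, h2]; ring
    rw [eLpNorm_congr_ae hco, eLpNorm_one_eq_lintegral_enorm,
      eLpNorm_one_eq_lintegral_enorm]; simp_rw [enorm_eq_nnnorm]
    have h1 : ∀ t : ℝ, (‖c * ((⇑v - ⇑v') (t / lam))‖₊ : ℝ≥0∞)
        = (‖c‖₊ : ℝ≥0∞) * (fun s => (‖(⇑v - ⇑v') s‖₊ : ℝ≥0∞)) (t / lam) := by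
      intro t; simp [nnnorm_mul]
    simp_rw [h1]
    rw [lintegral_const_mul' _ _ ENNReal.coe_ne_top,
      lintegral_div_scale hlam.ne' (fun s => (‖(⇑v - ⇑v') s‖₊ : ℝ≥0∞))]
    apply le_of_eq
    rw [ENNReal.coe_mul, ← Real.enorm_eq_ofReal_abs, enorm_eq_nnnorm, mul_assoc]
  have hval : ∀ w : WW, (phi lam H w).1 = F w.1 :=
    fun w => Lp.ext ((phi_coeFn hlam H w).trans (hF w.1).coeFn_toLp.symm)
  have hm : Measurable fun w : WW => (phi lam H w).1 := by
    simp_rw [hval]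
    exact hlip.continuous.measurable.comp measurable_subtype_coe
  exact hm.subtype_mk

def phiEquiv (H : ℝ) {lam : ℝ} (hlam : 0 < lam) : WW ≃ᵐ WW where
  toFun := phi lam H
  invFun := phi lam⁻¹ H
  left_inv := fun w => by
    have h := phi_comp (inv_pos.2 hlam) H w
    rwa [inv_inv] at h
  right_inv := phi_comp hlam H
  measurable_toFun := measurable_phi hlam H
  measurable_invFun := measurable_phi (inv_pos.2 hlam) H

end Stmt13
end Aux14

theorem stmt_13' (γ H : ℝ) (hγ : 0 < γ)
    (ν : Measure WW) [SigmaFinite ν]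
    (hscal : ∀ lam : ℝ, 0 < lam → ∀ A : Set WW, MeasurableSet A →
      ENNReal.ofReal (lam ^ (1 + γ)) * ν (phi lam H '' A) = ν A)
    (x : ℝ) (hx : 0 < x) :
    ∫⁻ w, (∫⁻ u : ℝ,
        ENNReal.ofReal ((∫ t in (0:ℝ)..x, (w.1 : ℝ → ℝ) (t - u)) ^ 2)) ∂ν =
      ENNReal.ofReal (x ^ (2 * H - γ)) *
        ∫⁻ w, (∫⁻ u : ℝ,
          ENNReal.ofReal ((∫ t in (0:ℝ)..1, (w.1 : ℝ → ℝ) (t - u)) ^ 2)) ∂ν := by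
  classical
  set G : WW → ℝ≥0∞ := fun w => ∫⁻ u : ℝ,
      ENNReal.ofReal ((∫ t in (0:ℝ)..1, (w.1 : ℝ → ℝ) (t - u)) ^ 2) with hG
  set Fx : WW → ℝ≥0∞ := fun w => ∫⁻ u : ℝ,
      ENNReal.ofReal ((∫ t in (0:ℝ)..x, (w.1 : ℝ → ℝ) (t - u)) ^ 2) with hFx
  have hx1 : (0:ℝ) < x⁻¹ := inv_pos.2 hx
  set e := Stmt13.phiEquiv H hx1 with he
  have hmap : Measure.map e ν = (ENNReal.ofReal (x ^ (1+γ)))⁻¹ • ν := by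
    refine Measure.ext fun A hA => ?_
    rw [MeasurableEquiv.map_apply, Measure.smul_apply, smul_eq_mul]
    have hpre : ⇑e ⁻¹' A = phi x H '' A := by
      ext w
      simp only [Set.mem_preimage, Set.mem_image]
      constructor
      · intro hw
        exact ⟨phi x⁻¹ H w, hw, Stmt13.phi_comp hx H w⟩
      · rintro ⟨a, ha, rfl⟩
        have h := Stmt13.phi_comp hx1 H a
        rw [inv_inv] at h
        show phi x⁻¹ H (phi x H a) ∈ A
        rwa [h]
    rw [hpre]
    have hs := hscal x hx A hA
    have hk0 : ENNReal.ofReal (x ^ (1+γ)) ≠ 0 := by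
      rw [Ne, ENNReal.ofReal_eq_zero, not_le]
      exact Real.rpow_pos_of_pos hx _
    calc ν (phi x H '' A)
        = (ENNReal.ofReal (x^(1+γ)))⁻¹ * (ENNReal.ofReal (x^(1+γ)) * ν (phi x H '' A)) := by
          rw [← mul_assoc, ENNReal.inv_mul_cancel hk0 ENNReal.ofReal_ne_top, one_mul]
      _ = (ENNReal.ofReal (x^(1+γ)))⁻¹ * ν A := by rw [hs]
  have htrans : ∫⁻ w, G (e w) ∂ν = (ENNReal.ofReal (x ^ (1+γ)))⁻¹ * ∫⁻ w, G w ∂ν := by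
    rw [← MeasureTheory.lintegral_map_equiv G e, hmap, lintegral_smul_measure, smul_eq_mul]
  have hpoint : ∀ w : WW,
      G (e w) = ENNReal.ofReal ((x⁻¹ ^ (H-1) * x⁻¹)^2 * x⁻¹) * Fx w := by
    intro w
    have hinner : ∀ u : ℝ, (∫ t in (0:ℝ)..1, (((e w).1 : ℝ → ℝ)) (t - u))
        = (x⁻¹ ^ (H-1) * x⁻¹) * ∫ s in (0:ℝ)..x, (w.1 : ℝ → ℝ) (s - x*u) := by
      intro u
      have hco2 : ∀ᵐ t : ℝ ∂(volume : Measure ℝ),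
          (((e w).1 : ℝ → ℝ)) (t - u) = x⁻¹ ^ (H-1) * (w.1 : ℝ → ℝ) ((t-u) / x⁻¹) :=
        Stmt13.ae_sub u (Stmt13.phi_coeFn hx1 H w)
      have step1 : (∫ t in (0:ℝ)..1, (((e w).1 : ℝ → ℝ)) (t - u))
          = ∫ t in (0:ℝ)..1,
              x⁻¹ ^ (H-1) * ((fun s => (w.1 : ℝ → ℝ) (s - x*u)) (x * t)) := by
        apply intervalIntegral.integral_congr_ae
        filter_upwards [hco2] with t ht _
        rw [ht, show (t-u)/x⁻¹ = x*t - x*u from by rw [div_eq_mul_inv, inv_inv]; ring]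
      have hcm := intervalIntegral.integral_comp_mul_left (a := 0) (b := 1)
        (fun s => (w.1 : ℝ → ℝ) (s - x*u)) hx.ne'
      rw [mul_zero, mul_one, smul_eq_mul] at hcm
      rw [step1, intervalIntegral.integral_const_mul, hcm, ← mul_assoc]
    have hGe : G (e w) = ∫⁻ u : ℝ, ENNReal.ofReal ((x⁻¹ ^ (H-1) * x⁻¹)^2)
        * ENNReal.ofReal ((∫ s in (0:ℝ)..x, (w.1 : ℝ → ℝ) (s - x*u))^2) := by
      simp only [hG]
      exact lintegral_congr fun u => by
        rw [hinner u, mul_pow, ENNReal.ofReal_mul (sq_nonneg _)]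
    rw [hGe, lintegral_const_mul' _ _ ENNReal.ofReal_ne_top]
    have hsub : (∫⁻ u : ℝ, ENNReal.ofReal ((∫ s in (0:ℝ)..x, (w.1 : ℝ → ℝ) (s - x*u))^2))
        = ENNReal.ofReal |x⁻¹| * Fx w := by
      have h0 : ∀ u : ℝ, ENNReal.ofReal ((∫ s in (0:ℝ)..x, (w.1 : ℝ → ℝ) (s - x*u))^2)
          = (fun v => ENNReal.ofReal ((∫ s in (0:ℝ)..x, (w.1 : ℝ → ℝ) (s - v))^2))
              (u / x⁻¹) := by
        intro u
        simp only [show u / x⁻¹ = x * u from by rw [div_eq_mul_inv, inv_inv, mul_comm]]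
      simp_rw [h0]
      exact Stmt13.lintegral_div_scale (inv_ne_zero hx.ne')
        (fun v => ENNReal.ofReal ((∫ s in (0:ℝ)..x, (w.1 : ℝ → ℝ) (s - v))^2))
    rw [hsub, abs_of_pos hx1, ← mul_assoc, ← ENNReal.ofReal_mul (sq_nonneg _)]
  have hC0 : (0:ℝ) < (x⁻¹ ^ (H-1) * x⁻¹)^2 * x⁻¹ :=
    mul_pos (pow_pos (mul_pos (Real.rpow_pos_of_pos hx1 _) hx1) 2) hx1
  set k := ENNReal.ofReal ((x⁻¹ ^ (H-1) * x⁻¹)^2 * x⁻¹) with hk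
  have hk0 : k ≠ 0 := by rw [hk, Ne, ENNReal.ofReal_eq_zero, not_le]; exact hC0
  have hkt : k ≠ ∞ := ENNReal.ofReal_ne_top
  have hmain : k * ∫⁻ w, Fx w ∂ν = (ENNReal.ofReal (x ^ (1+γ)))⁻¹ * ∫⁻ w, G w ∂ν := by
    rw [← lintegral_const_mul' _ _ hkt, ← htrans]
    exact lintegral_congr fun w => (hpoint w).symm
  have hfin : ∫⁻ w, Fx w ∂ν
      = k⁻¹ * ((ENNReal.ofReal (x^(1+γ)))⁻¹ * ∫⁻ w, G w ∂ν) := by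
    rw [← hmain, ← mul_assoc, ENNReal.inv_mul_cancel hk0 hkt, one_mul]
  rw [hfin, ← mul_assoc]
  congr 1
  have hreal : (((x⁻¹ ^ (H-1) * x⁻¹)^2 * x⁻¹) * x ^ (1+γ))⁻¹ = x ^ (2*H - γ) := by
    have h1 : x⁻¹ ^ (H-1) * x⁻¹ = x ^ (-H) := by
      rw [Real.inv_rpow hx.le, ← Real.rpow_neg hx.le, ← Real.rpow_neg_one x,
        ← Real.rpow_add hx]
      congr 1; ring
    rw [h1, ← Real.rpow_natCast (x ^ (-H)) 2, ← Real.rpow_mul hx.le, ← Real.rpow_neg_one x,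
      ← Real.rpow_add hx, ← Real.rpow_add hx, ← Real.rpow_neg hx.le]
    congr 1; push_cast; ring
  rw [hk, ← ENNReal.ofReal_inv_of_pos hC0,
    ← ENNReal.ofReal_inv_of_pos (Real.rpow_pos_of_pos hx _),
    ← ENNReal.ofReal_mul (by positivity), ← mul_inv, hreal]

/-- scaling of the second moment integral. If `ν` is a `(γ,H)`-scaling
σ-finite measure on `𝕎` with `γ > 0`, then for every `x > 0`, in `[0,∞]`:
`∫_{ℝ×𝕎} (∫_0^x w(t-u) dt)² du ν(dw) = x^{2H-γ} ∫_{ℝ×𝕎} (∫_0^1 w(t-u) dt)² du ν(dw)`. -/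
theorem stmt_13 (γ H : ℝ) (hγ : 0 < γ)
    (ν : Measure WW) [SigmaFinite ν] (hscal : ScalingMeasure ν γ H)
    (x : ℝ) (hx : 0 < x) :
    ∫⁻ w, (∫⁻ u : ℝ,
        ENNReal.ofReal ((∫ t in (0:ℝ)..x, (w.1 : ℝ → ℝ) (t - u)) ^ 2)) ∂ν =
      ENNReal.ofReal (x ^ (2 * H - γ)) *
        ∫⁻ w, (∫⁻ u : ℝ,
          ENNReal.ofReal ((∫ t in (0:ℝ)..1, (w.1 : ℝ → ℝ) (t - u)) ^ 2)) ∂ν :=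
  stmt_13' γ H hγ ν hscal x hx
end

section
/- Let 𝕎 be the space of (a.e.-equivalence classes of) Lebesgue-integrable functions w : ℝ → ℝ vanishing a.e. on (−∞,0); for λ > 0 and H ∈ ℝ let φ_{λ,H} : 𝕎 → 𝕎 be the map (φ_{λ,H} w)(t) := λ^{H−1} w(t/λ). Let γ > 0, H ∈ ℝ, and let ν be a σ-finite Borel measure on 𝕎 which is (γ,H)-scaling (λ^{1+γ} ν(φ_{λ,H}(A)) = ν(A) for all λ > 0 and Borel A) and satisfies: for every x > 0, ∫_{ℝ×𝕎} ( |∫_0^x w(t−u) dt| ∧ |∫_0^x w(t−u) dt|² ) du ν(dw) < ∞. Then for every λ > 0, every m ∈ ℕ, all θ_1,…,θ_m ∈ ℝ and all (x_j, y_j) ∈ (0,∞)² (j = 1,…,m): ∫_{ℝ×(0,∞)×𝕎} Ψ( Σ_{j=1}^m θ_j · 1(v ≤ λ^γ y_j) · ∫_0^{λ x_j} w(t−u) dt ) du dv ν(dw) = ∫_{ℝ×(0,∞)×𝕎} Ψ( λ^H · Σ_{j=1}^m θ_j · 1(v ≤ y_j) · ∫_0^{x_j} w(t−u) dt ) du dv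 ν(dw), where Ψ(z) := e^{iz} − 1 − iz. -/
open MeasureTheory Filter Set
open scoped ENNReal Topology

namespace Stmt14Aux

open MeasureTheory Filter Set
open scoped ENNReal Topology

noncomputable section

instance : BorelSpace (Lp ℝ 1 (volume : Measure ℝ)) := ⟨rfl⟩

variable {lam H : ℝ}

/-- Transfer a.e. properties along affine maps. -/
lemma ae_affine {a b : ℝ} (ha : a ≠ 0) {p : ℝ → Prop}
    (h : ∀ᵐ t ∂(volume : Measure ℝ), p t) :
    ∀ᵐ t ∂(volume : Measure ℝ), p (a * t + b) := by
  have hq : Measure.QuasiMeasurePreserving (fun t : ℝ => a * t + b) volume volume := by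
    refine ⟨(measurable_const_mul a).add_const b, ?_⟩
    have h1 : (fun t : ℝ => a * t + b) = (fun t : ℝ => t + b) ∘ (fun t : ℝ => a * t) := rfl
    rw [h1, ← Measure.map_map (measurable_add_const b) (measurable_const_mul a),
      Real.map_volume_mul_left ha, Measure.map_smul,
      (measurePreserving_add_right volume b).map_eq]
    exact Measure.smul_absolutelyContinuous
  exact hq.ae h

lemma ae_comp_div (hlam : lam ≠ 0) {p : ℝ → Prop}
    (h : ∀ᵐ t ∂(volume : Measure ℝ), p t) :
    ∀ᵐ t ∂(volume : Measure ℝ), p (t / lam) := by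
  have := ae_affine (a := lam⁻¹) (b := 0) (inv_ne_zero hlam) h
  simpa [div_eq_inv_mul] using this

lemma ae_comp_sub (c : ℝ) {p : ℝ → Prop}
    (h : ∀ᵐ t ∂(volume : Measure ℝ), p t) :
    ∀ᵐ t ∂(volume : Measure ℝ), p (t - c) := by
  have := ae_affine (a := 1) (b := -c) (one_ne_zero) h
  simpa [sub_eq_add_neg] using this

lemma ae_comp_mul (hlam : lam ≠ 0) {p : ℝ → Prop}
    (h : ∀ᵐ t ∂(volume : Measure ℝ), p t) :
    ∀ᵐ t ∂(volume : Measure ℝ), p (lam * t) := by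
  have := ae_affine (a := lam) (b := 0) hlam h
  simpa using this

lemma phi_cond (hlam : 0 < lam) (w : WW) :
    MemLp (fun t => lam ^ (H - 1) * (w.1 : ℝ → ℝ) (t / lam)) 1 (volume : Measure ℝ) ∧
      ∀ᵐ t ∂(volume : Measure ℝ), t < 0 → lam ^ (H - 1) * (w.1 : ℝ → ℝ) (t / lam) = 0 := by
  constructor
  · rw [memLp_one_iff_integrable]
    have hw : Integrable ((w.1 : ℝ → ℝ)) volume := L1.integrable_coeFn w.1
    have h2 : Integrable (fun t : ℝ => (w.1 : ℝ → ℝ) (lam⁻¹ * t)) volume :=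
      hw.comp_mul_left' (inv_ne_zero hlam.ne')
    have h3 : Integrable (fun t : ℝ => (w.1 : ℝ → ℝ) (t / lam)) volume := by
      simpa [div_eq_inv_mul] using h2
    exact h3.const_mul _
  · filter_upwards [ae_comp_div hlam.ne' w.2] with t ht hlt
    rw [ht (div_neg_of_neg_of_pos hlt hlam), mul_zero]

lemma coeFn_phi (hlam : 0 < lam) (w : WW) :
    (((phi lam H w).1 : Lp ℝ 1 (volume : Measure ℝ)) : ℝ → ℝ)
      =ᵐ[(volume : Measure ℝ)] fun t => lam ^ (H - 1) * (w.1 : ℝ → ℝ) (t / lam) := by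
  rw [phi, dif_pos (phi_cond hlam w)]
  exact (phi_cond hlam w).1.coeFn_toLp

end

end Stmt14Aux
namespace Stmt14Aux

open MeasureTheory Filter Set
open scoped ENNReal Topology

noncomputable section

variable {lam H : ℝ}

lemma mem_scale (hlam : 0 < lam) (f : Lp ℝ 1 (volume : Measure ℝ)) :
    MemLp (fun t => lam ^ (H - 1) * (f : ℝ → ℝ) (t / lam)) 1 (volume : Measure ℝ) := by
  rw [memLp_one_iff_integrable]
  have hw : Integrable ((f : ℝ → ℝ)) volume := L1.integrable_coeFn f
  have h2 : Integrable (fun t : ℝ => (f : ℝ → ℝ) (lam⁻¹ * t)) volume :=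
    hw.comp_mul_left' (inv_ne_zero hlam.ne')
  have h3 : Integrable (fun t : ℝ => (f : ℝ → ℝ) (t / lam)) volume := by
    simpa [div_eq_inv_mul] using h2
  exact h3.const_mul _

/-- Total version of the scaling map on `L¹`. -/
def Pmap (lam H : ℝ) (f : Lp ℝ 1 (volume : Measure ℝ)) : Lp ℝ 1 (volume : Measure ℝ) := by
  classical
  exact if h : MemLp (fun t => lam ^ (H - 1) * (f : ℝ → ℝ) (t / lam)) 1 (volume : Measure ℝ)
  then h.toLp _ else 0

lemma phi_val (hlam : 0 < lam) (w : WW) : (phi lam H w).1 = Pmap lam H w.1 := by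
  rw [phi, dif_pos (phi_cond hlam w), Pmap, dif_pos (phi_cond (H := H) hlam w).1]

lemma aemeasurable_smul_volume {g : ℝ → ℝ≥0∞} (c : ℝ≥0∞)
    (hg : AEMeasurable g (volume : Measure ℝ)) :
    AEMeasurable g (c • (volume : Measure ℝ)) :=
  hg.mono' Measure.smul_absolutelyContinuous

lemma lintegral_comp_div (hlam : 0 < lam) (g : ℝ → ℝ≥0∞)
    (hg : AEMeasurable g (volume : Measure ℝ)) :
    ∫⁻ t, g (t / lam) ∂(volume : Measure ℝ)
      = ENNReal.ofReal lam * ∫⁻ s, g s ∂(volume : Measure ℝ) := by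
  have hmap : Measure.map (fun t : ℝ => lam⁻¹ * t) volume
      = ENNReal.ofReal lam • (volume : Measure ℝ) := by
    rw [Real.map_volume_mul_left (inv_ne_zero hlam.ne')]
    congr 1
    rw [inv_inv, abs_of_pos hlam]
  have h1 : ∫⁻ t, g (lam⁻¹ * t) ∂(volume : Measure ℝ)
      = ∫⁻ s, g s ∂(Measure.map (fun t : ℝ => lam⁻¹ * t) volume) := by
    rw [lintegral_map' (by rw [hmap]; exact aemeasurable_smul_volume _ hg)
      (measurable_const_mul _).aemeasurable]
  have h2 : ∫⁻ t, g (t / lam) ∂(volume : Measure ℝ)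
      = ∫⁻ t, g (lam⁻¹ * t) ∂(volume : Measure ℝ) := by
    simp_rw [div_eq_inv_mul]
  rw [h2, h1, hmap, lintegral_smul_measure, smul_eq_mul]

lemma eLpNorm_scale (hlam : 0 < lam) (c : ℝ) (u : ℝ → ℝ)
    (hu : AEMeasurable u (volume : Measure ℝ)) :
    eLpNorm (fun t => c * u (t / lam)) 1 (volume : Measure ℝ)
      = ENNReal.ofReal (|c| * lam) * eLpNorm u 1 (volume : Measure ℝ) := by
  rw [eLpNorm_one_eq_lintegral_enorm, eLpNorm_one_eq_lintegral_enorm]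
  have h1 : ∀ t : ℝ, ‖c * u (t / lam)‖ₑ = ‖c‖ₑ * ‖u (t / lam)‖ₑ := by
    intro t; rw [enorm_mul]
  simp_rw [h1]
  rw [lintegral_const_mul' _ _ enorm_ne_top,
    lintegral_comp_div hlam (fun s => ‖u s‖ₑ) hu.enorm,
    ENNReal.ofReal_mul (abs_nonneg c), ← mul_assoc]
  congr 2
  rw [Real.enorm_eq_ofReal_abs]

lemma lipschitz_Pmap (hlam : 0 < lam) :
    LipschitzWith (|lam ^ (H - 1)| * lam).toNNReal (Pmap lam H) := by
  apply LipschitzWith.of_dist_le_mul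
  intro f g
  rw [dist_eq_norm, dist_eq_norm, Pmap, dif_pos (mem_scale hlam f)]
  rw [show (Pmap lam H g : Lp ℝ 1 (volume : Measure ℝ))
    = (mem_scale hlam g).toLp _ from by rw [Pmap, dif_pos (mem_scale (H := H) hlam g)]]
  rw [← MemLp.toLp_sub (mem_scale hlam f) (mem_scale hlam g), Lp.norm_toLp _ ((mem_scale hlam f).sub (mem_scale hlam g))]
  have key : (fun t => lam ^ (H - 1) * (f : ℝ → ℝ) (t / lam))
        - (fun t => lam ^ (H - 1) * (g : ℝ → ℝ) (t / lam))
      =ᵐ[(volume : Measure ℝ)]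
        fun t => lam ^ (H - 1) * ((f - g : Lp ℝ 1 (volume : Measure ℝ)) : ℝ → ℝ) (t / lam) := by
    filter_upwards [ae_comp_div hlam.ne' (Lp.coeFn_sub f g)] with t ht
    simp only [Pi.sub_apply]
    rw [ht]
    simp only [Pi.sub_apply]
    ring
  rw [eLpNorm_congr_ae key,
    eLpNorm_scale hlam _ _ ((Lp.aestronglyMeasurable (f - g)).aemeasurable),
    ENNReal.toReal_mul, ENNReal.toReal_ofReal (by positivity), Lp.norm_def,
    Real.coe_toNNReal _ (by positivity)]

lemma measurable_phi (hlam : 0 < lam) : Measurable (phi lam H) := by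
  have h1 : Measurable (Pmap lam H) := (lipschitz_Pmap hlam).continuous.measurable
  have h2 : Measurable fun w : WW => (phi lam H w).1 := by
    have he : (fun w : WW => (phi lam H w).1) = fun w : WW => Pmap lam H w.1 :=
      funext fun w => phi_val hlam w
    rw [he]
    exact h1.comp measurable_subtype_coe
  exact h2.subtype_mk

lemma phi_phi (hlam : 0 < lam) (w : WW) : phi lam⁻¹ H (phi lam H w) = w := by
  apply Subtype.ext
  apply Lp.ext (p := (1 : ℝ≥0∞)) (μ := (volume : Measure ℝ))
  have h1 := coeFn_phi (H := H) (inv_pos.2 hlam) (phi lam H w)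
  have h3 : ∀ᵐ t ∂(volume : Measure ℝ),
      (((phi lam H w).1 : Lp ℝ 1 (volume : Measure ℝ)) : ℝ → ℝ) (lam * t)
        = lam ^ (H - 1) * (w.1 : ℝ → ℝ) ((lam * t) / lam) :=
    ae_comp_mul hlam.ne' (coeFn_phi (H := H) hlam w)
  filter_upwards [h1, h3] with t e1 e3
  rw [e1]
  have ht : t / lam⁻¹ = lam * t := by field_simp
  rw [ht, e3, mul_div_cancel_left₀ _ hlam.ne', ← mul_assoc,
    Real.inv_rpow hlam.le, inv_mul_cancel₀ (ne_of_gt (Real.rpow_pos_of_pos hlam _)), one_mul]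

end

end Stmt14Aux
namespace Stmt14Aux

open MeasureTheory Filter Set
open scoped ENNReal Topology

noncomputable section

variable {lam H : ℝ}

lemma phi_preimage (hlam : 0 < lam) (A : Set WW) :
    phi lam H ⁻¹' A = phi lam⁻¹ H '' A := by
  ext w
  constructor
  · intro hw
    exact ⟨phi lam H w, hw, phi_phi hlam w⟩
  · rintro ⟨v, hv, rfl⟩
    have h2 := phi_phi (H := H) (inv_pos.2 hlam) v
    rw [inv_inv] at h2
    simpa [Set.mem_preimage, h2] using hv

lemma map_phi {γ : ℝ} (hlam : 0 < lam) (ν : Measure WW) (hscal : ScalingMeasure ν γ H) :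
    Measure.map (phi lam H) ν = ENNReal.ofReal (lam ^ (1 + γ)) • ν := by
  ext A hA
  rw [Measure.map_apply (measurable_phi hlam) hA, Measure.smul_apply, smul_eq_mul,
    phi_preimage hlam A]
  have h := hscal lam⁻¹ (inv_pos.2 hlam) A hA
  have hpow : (lam⁻¹) ^ (1 + γ) = (lam ^ (1 + γ))⁻¹ := Real.inv_rpow hlam.le _
  have hppos : 0 < lam ^ (1 + γ) := Real.rpow_pos_of_pos hlam _
  rw [hpow, ENNReal.ofReal_inv_of_pos hppos] at h
  rw [← h, ← mul_assoc, ENNReal.mul_inv_cancel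
    (by simpa using ENNReal.ofReal_pos.2 hppos) ENNReal.ofReal_ne_top, one_mul]

lemma smul_prod' {α β : Type*} [MeasurableSpace α] [MeasurableSpace β] (c : ℝ≥0∞)
    (μ : Measure α) (ν : Measure β) [SFinite μ] [SFinite ν] :
    (c • μ).prod ν = c • μ.prod ν := by
  ext s hs
  rw [Measure.smul_apply, smul_eq_mul, Measure.prod_apply hs, Measure.prod_apply hs,
    lintegral_smul_measure, smul_eq_mul]

lemma prod_smul' {α β : Type*} [MeasurableSpace α] [MeasurableSpace β] {c : ℝ≥0∞} (hc : c ≠ ⊤)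
    (μ : Measure α) (ν : Measure β) [SFinite μ] [SFinite ν] :
    μ.prod (c • ν) = c • μ.prod ν := by
  ext s hs
  rw [Measure.smul_apply, smul_eq_mul, Measure.prod_apply hs, Measure.prod_apply hs,
    ← lintegral_const_mul' _ _ hc]
  rfl

lemma measurable_intInt (c : ℝ) :
    Measurable fun q : ℝ × WW => ∫ t in (0:ℝ)..c, (q.2.1 : ℝ → ℝ) (t - q.1) := by
  have heq : (fun q : ℝ × WW => ∫ t in (0:ℝ)..c, (q.2.1 : ℝ → ℝ) (t - q.1))
      = Function.uncurry (fun (u : ℝ) (w : WW) => ∫ t in (0:ℝ)..c, (w.1 : ℝ → ℝ) (t - u)) := rfl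
  rw [heq]
  apply measurable_uncurry_of_continuous_of_measurable
  · intro w
    have hint : Integrable ((w.1 : ℝ → ℝ)) volume := L1.integrable_coeFn w.1
    have h2 : (fun u : ℝ => ∫ t in (0:ℝ)..c, (w.1 : ℝ → ℝ) (t - u))
        = fun u : ℝ => (∫ t in (0:ℝ)..(c - u), (w.1 : ℝ → ℝ) t)
            - ∫ t in (0:ℝ)..(0 - u), (w.1 : ℝ → ℝ) t := by
      funext u
      rw [intervalIntegral.integral_comp_sub_right _ u,
        intervalIntegral.integral_interval_sub_left hint.intervalIntegrable
          hint.intervalIntegrable]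
    rw [h2]
    exact ((hint.continuous_primitive 0).comp (continuous_const.sub continuous_id)).sub
      ((hint.continuous_primitive 0).comp (continuous_const.sub continuous_id))
  · intro u
    have h2 : (fun w : WW => ∫ t in (0:ℝ)..c, (w.1 : ℝ → ℝ) (t - u))
        = fun w : WW => (∫ t in Set.Ioc (0 - u) (c - u), (w.1 : ℝ → ℝ) t ∂volume)
            - ∫ t in Set.Ioc (c - u) (0 - u), (w.1 : ℝ → ℝ) t ∂volume := by
      funext w
      rw [intervalIntegral.integral_comp_sub_right _ u, intervalIntegral]
    rw [h2]
    exact (((continuous_setIntegral _).measurable).comp measurable_subtype_coe).sub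
      (((continuous_setIntegral _).measurable).comp measurable_subtype_coe)

lemma continuous_Psi : Continuous Psi := by
  unfold Psi
  fun_prop

end

end Stmt14Aux
namespace Stmt14Aux

open MeasureTheory Filter Set
open scoped ENNReal Topology

noncomputable section

variable {lam H : ℝ}

lemma scale_integral (hlam : 0 < lam) (w : WW) (c u : ℝ) :
    ∫ t in (0:ℝ)..(lam * c),
        (((phi lam H w).1 : Lp ℝ 1 (volume : Measure ℝ)) : ℝ → ℝ) (t - lam * u)
      = lam ^ H * ∫ t in (0:ℝ)..c, (w.1 : ℝ → ℝ) (t - u) := by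
  have h1 : ∀ᵐ t ∂(volume : Measure ℝ),
      (((phi lam H w).1 : Lp ℝ 1 (volume : Measure ℝ)) : ℝ → ℝ) (t - lam * u)
        = lam ^ (H - 1) * (w.1 : ℝ → ℝ) ((t - lam * u) / lam) :=
    ae_comp_sub (lam * u) (coeFn_phi hlam w)
  have h2 : ∫ t in (0:ℝ)..(lam * c),
        (((phi lam H w).1 : Lp ℝ 1 (volume : Measure ℝ)) : ℝ → ℝ) (t - lam * u)
      = ∫ t in (0:ℝ)..(lam * c), lam ^ (H - 1) * (w.1 : ℝ → ℝ) ((t - lam * u) / lam) := by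
    refine intervalIntegral.integral_congr_ae ?_
    filter_upwards [h1] with t ht _
    exact ht
  rw [h2]
  have h3 : ∀ t : ℝ, (t - lam * u) / lam = t / lam - u := by
    intro t; field_simp
  simp_rw [h3]
  rw [intervalIntegral.integral_const_mul]
  have h4 := intervalIntegral.integral_comp_div (a := 0) (b := lam * c)
    (fun s => (w.1 : ℝ → ℝ) (s - u)) hlam.ne'
  rw [h4, zero_div, mul_div_cancel_left₀ _ hlam.ne', smul_eq_mul, ← mul_assoc]
  congr 1
  rw [← Real.rpow_add_one hlam.ne' (H - 1)]
  norm_num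

end

end Stmt14Aux

/-- characteristic-exponent form of `(γ,H)`-self-similarity of `J_ν`.
If `ν` is a `(γ,H)`-scaling σ-finite measure on `𝕎` with `γ > 0` satisfying the basic
integrability condition, then for every `λ > 0`, `m`, `θ_j ∈ ℝ`, `(x_j, y_j) ∈ (0,∞)²`:
`∫ Ψ(Σ_j θ_j 1(v ≤ λ^γ y_j) ∫_0^{λ x_j} w(t-u) dt) du dv ν(dw)
  = ∫ Ψ(λ^H Σ_j θ_j 1(v ≤ y_j) ∫_0^{x_j} w(t-u) dt) du dv ν(dw)`. -/
theorem stmt_14 (γ H : ℝ) (hγ : 0 < γ)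
    (ν : Measure WW) [SigmaFinite ν] (hscal : ScalingMeasure ν γ H)
    (hcru : ∀ x : ℝ, 0 < x →
      (∫⁻ p : ℝ × WW,
        ENNReal.ofReal (min |∫ t in (0:ℝ)..x, (p.2.1 : ℝ → ℝ) (t - p.1)|
          (|∫ t in (0:ℝ)..x, (p.2.1 : ℝ → ℝ) (t - p.1)| ^ 2))
        ∂((volume : Measure ℝ).prod ν)) ≠ ⊤)
    (lam : ℝ) (hlam : 0 < lam) (m : ℕ) (θ x y : Fin m → ℝ)
    (hx : ∀ j, 0 < x j) (hy : ∀ j, 0 < y j) :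
    ∫ p : ℝ × ℝ × WW,
        Psi (∑ j : Fin m, θ j * (if p.2.1 ≤ lam ^ γ * y j then (1:ℝ) else 0) *
          ∫ t in (0:ℝ)..(lam * x j), (p.2.2.1 : ℝ → ℝ) (t - p.1))
        ∂((volume : Measure ℝ).prod (((volume : Measure ℝ).restrict (Set.Ioi 0)).prod ν)) =
      ∫ p : ℝ × ℝ × WW,
        Psi (lam ^ H * ∑ j : Fin m, θ j * (if p.2.1 ≤ y j then (1:ℝ) else 0) *
          ∫ t in (0:ℝ)..(x j), (p.2.2.1 : ℝ → ℝ) (t - p.1))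
        ∂((volume : Measure ℝ).prod (((volume : Measure ℝ).restrict (Set.Ioi 0)).prod ν)) := by
  classical
  have hγl : 0 < lam ^ γ := Real.rpow_pos_of_pos hlam γ
  set νR : Measure ℝ := (volume : Measure ℝ).restrict (Set.Ioi 0) with hνR
  set μt : Measure (ℝ × ℝ × WW) := (volume : Measure ℝ).prod (νR.prod ν) with hμt
  set T : ℝ × ℝ × WW → ℝ × ℝ × WW :=
    Prod.map (fun u : ℝ => lam * u) (Prod.map (fun v : ℝ => lam ^ γ * v) (phi lam H)) with hTdef
  have hmT : Measurable T :=
    (measurable_const_mul lam).prodMap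
      ((measurable_const_mul (lam ^ γ)).prodMap (Stmt14Aux.measurable_phi hlam))
  have hmapT : Measure.map T μt = μt := by
    rw [hμt, hTdef,
      ← Measure.map_prod_map _ _ (measurable_const_mul lam)
        ((measurable_const_mul (lam ^ γ)).prodMap (Stmt14Aux.measurable_phi hlam)),
      ← Measure.map_prod_map _ _ (measurable_const_mul (lam ^ γ))
        (Stmt14Aux.measurable_phi hlam),
      Stmt14Aux.map_phi hlam ν hscal]
    have hpre : (fun v : ℝ => lam ^ γ * v) ⁻¹' (Set.Ioi 0) = Set.Ioi 0 := by
      ext v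
      simp only [Set.mem_preimage, Set.mem_Ioi]
      constructor
      · intro h
        by_contra hv
        push_neg at hv
        exact absurd h (not_lt.2 (mul_nonpos_iff.2 (Or.inl ⟨hγl.le, hv⟩)))
      · intro h
        exact mul_pos hγl h
    have hres : Measure.map (fun v : ℝ => lam ^ γ * v) νR
        = ENNReal.ofReal (lam ^ γ)⁻¹ • νR := by
      rw [hνR]
      conv_lhs => rw [show (volume : Measure ℝ).restrict (Set.Ioi 0)
        = (volume : Measure ℝ).restrict ((fun v : ℝ => lam ^ γ * v) ⁻¹' (Set.Ioi 0)) from by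
          rw [hpre]]
      rw [← Measure.restrict_map (measurable_const_mul _) measurableSet_Ioi,
        Real.map_volume_mul_left hγl.ne', Measure.restrict_smul, abs_of_pos (inv_pos.2 hγl)]
    rw [hres, Real.map_volume_mul_left hlam.ne']
    rw [Stmt14Aux.prod_smul' ENNReal.ofReal_ne_top, Stmt14Aux.smul_prod',
      Stmt14Aux.prod_smul' ENNReal.ofReal_ne_top, Stmt14Aux.smul_prod',
      Stmt14Aux.prod_smul' ENNReal.ofReal_ne_top]
    rw [smul_smul, smul_smul]
    have hone : ENNReal.ofReal |lam⁻¹| * ENNReal.ofReal (lam ^ (1 + γ))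
        * ENNReal.ofReal (lam ^ γ)⁻¹ = 1 := by
      rw [← ENNReal.ofReal_mul (abs_nonneg _),
        ← ENNReal.ofReal_mul (by positivity)]
      rw [abs_of_pos (inv_pos.2 hlam), Real.rpow_add hlam, Real.rpow_one]
      rw [show lam⁻¹ * (lam * lam ^ γ) * (lam ^ γ)⁻¹ = 1 from by field_simp]
      exact ENNReal.ofReal_one
    rw [hone, one_smul]
  have hfL : Measurable fun p : ℝ × ℝ × WW =>
      Psi (∑ j : Fin m, θ j * (if p.2.1 ≤ lam ^ γ * y j then (1:ℝ) else 0) *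
        ∫ t in (0:ℝ)..(lam * x j), (p.2.2.1 : ℝ → ℝ) (t - p.1)) := by
    apply Stmt14Aux.continuous_Psi.measurable.comp
    apply Finset.measurable_sum
    intro j _
    refine Measurable.mul (Measurable.mul measurable_const ?_) ?_
    · exact Measurable.ite
        (measurableSet_le (measurable_fst.comp measurable_snd) measurable_const)
        measurable_const measurable_const
    · exact (Stmt14Aux.measurable_intInt (lam * x j)).comp
        (measurable_fst.prodMk (measurable_snd.comp measurable_snd))
  have key : ∀ f : ℝ × ℝ × WW → ℂ, Measurable f →
      ∫ p, f p ∂μt = ∫ p, f (T p) ∂μt := by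
    intro f hf
    conv_lhs => rw [← hmapT]
    exact integral_map hmT.aemeasurable (by rw [hmapT]; exact hf.aestronglyMeasurable)
  rw [key _ hfL]
  refine integral_congr_ae (Filter.Eventually.of_forall ?_)
  rintro ⟨u, v, w⟩
  show Psi (∑ j : Fin m, θ j * (if lam ^ γ * v ≤ lam ^ γ * y j then (1:ℝ) else 0) *
      ∫ t in (0:ℝ)..(lam * x j), ((phi lam H w).1 : ℝ → ℝ) (t - lam * u)) = _
  congr 1
  rw [Finset.mul_sum]
  refine Finset.sum_congr rfl fun j _ => ?_
  rw [Stmt14Aux.scale_integral hlam w (x j) u,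
    if_congr (mul_le_mul_iff_right₀ hγl) rfl rfl]
  ring
end

section
/- Let 𝕎 be the space of (a.e.-equivalence classes of) Lebesgue-integrable functions w : ℝ → ℝ vanishing a.e. on (−∞,0); for λ > 0 and H ∈ ℝ let φ_{λ,H} : 𝕎 → 𝕎 be the map (φ_{λ,H} w)(t) := λ^{H−1} w(t/λ). Let γ > 0 and γ/2 < H ≤ 1 + γ/2, set H₁ := H − γ/2 ∈ (0,1], and let ν be a σ-finite Borel measure on 𝕎 which is (γ,H)-scaling and satisfies both: (a) for every x > 0, ∫_{ℝ×𝕎} ( |∫_0^x w(t−u) dt| ∧ |∫_0^x w(t−u) dt|² ) du ν(dw) < ∞, and (b) C_ν² := ∫_{ℝ×𝕎} ( ∫_0^1 w(t−u) dt )² du ν(dw) < ∞. Then for every x > 0 and θ ∈ ℝ, lim_{λ→0+} ∫_{ℝ×𝕎} Ψ( θ λ^{−H₁} ∫_0^{λx} w(t−u) dt ) du ν(dw) = −(θ²/2) · C_ν² · x^{2H₁}, where Ψ(z) := e^{iz} − 1 − iz. -/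
open MeasureTheory Filter Set
open scoped ENNReal Topology

section S15Aux

open MeasureTheory Filter Set
open scoped ENNReal Topology

noncomputable section

instance : BorelSpace (Lp ℝ 1 (volume : Measure ℝ)) := ⟨rfl⟩

namespace S15

lemma qmp_div {lam : ℝ} (hlam : lam ≠ 0) :
    Measure.QuasiMeasurePreserving (fun t : ℝ => t / lam) volume volume := by
  have hmap : Measure.map (fun t : ℝ => t / lam) volume
      = ENNReal.ofReal |lam| • volume := by
    have : (fun t : ℝ => t / lam) = (fun t : ℝ => lam⁻¹ * t) := by
      funext t; rw [div_eq_inv_mul]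
    rw [this, Real.map_volume_mul_left (inv_ne_zero hlam), inv_inv]
  refine ⟨measurable_id.div_const lam, ?_⟩
  rw [hmap]
  intro s hs
  simp [hs]

lemma memLp_scale {lam : ℝ} (hlam : lam ≠ 0) (c : ℝ) (w : WW) :
    MemLp (fun t => c * (w.1 : ℝ → ℝ) (t / lam)) 1 (volume : Measure ℝ) := by
  rw [memLp_one_iff_integrable]
  exact ((L1.integrable_coeFn w.1).comp_div hlam).const_mul c

lemma phi_coe {lam : ℝ} (hlam : 0 < lam) (H : ℝ) (w : WW) :
    ((phi lam H w).1 : ℝ → ℝ) =ᵐ[(volume : Measure ℝ)]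
      fun t => lam ^ (H - 1) * (w.1 : ℝ → ℝ) (t / lam) := by
  have hmem := memLp_scale hlam.ne' (lam ^ (H - 1)) w
  have hvan : ∀ᵐ t ∂(volume : Measure ℝ),
      t < 0 → lam ^ (H - 1) * (w.1 : ℝ → ℝ) (t / lam) = 0 := by
    filter_upwards [(qmp_div hlam.ne').ae w.2] with t ht htneg
    rw [ht (div_neg_of_neg_of_pos htneg hlam), mul_zero]
  rw [phi, dif_pos ⟨hmem, hvan⟩]
  exact hmem.coeFn_toLp

end S15
end
end S15Aux
instance : BorelSpace WW := Subtype.borelSpace _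

namespace S15

lemma lintegral_scale {lam : ℝ} (hlam : 0 < lam) (g : ℝ → ℝ≥0∞)
    (hg : AEMeasurable g (volume : Measure ℝ)) :
    ∫⁻ t, g (t / lam) ∂(volume : Measure ℝ)
      = ENNReal.ofReal lam * ∫⁻ t, g t ∂(volume : Measure ℝ) := by
  have hmap : Measure.map (fun t : ℝ => t / lam) volume
      = ENNReal.ofReal lam • (volume : Measure ℝ) := by
    have h : (fun t : ℝ => t / lam) = (fun t : ℝ => lam⁻¹ * t) := by
      funext t; rw [div_eq_inv_mul]
    rw [h, Real.map_volume_mul_left (inv_ne_zero hlam.ne'), inv_inv,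
      abs_of_pos hlam]
  have hg' : AEMeasurable g (Measure.map (fun t : ℝ => t / lam) volume) := by
    rw [hmap]
    exact hg.mono_ac (by intro s hs; simp [hs])
  rw [← lintegral_map' hg' (qmp_div hlam.ne').aemeasurable, hmap,
    lintegral_smul_measure, smul_eq_mul]

lemma phi_dist {lam : ℝ} (hlam : 0 < lam) (H : ℝ) (w w' : WW) :
    dist (phi lam H w) (phi lam H w')
      = (lam ^ (H - 1) * lam) * dist w w' := by
  have hc : (0:ℝ) < lam ^ (H - 1) := Real.rpow_pos_of_pos hlam _
  have hD : AEStronglyMeasurable (⇑w.1 - ⇑w'.1 : ℝ → ℝ) (volume : Measure ℝ) :=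
    (Lp.aestronglyMeasurable w.1).sub (Lp.aestronglyMeasurable w'.1)
  have key : eLpNorm (⇑(phi lam H w).1 - ⇑(phi lam H w').1) 1 (volume : Measure ℝ)
      = ENNReal.ofReal (lam ^ (H - 1) * lam)
        * eLpNorm (⇑w.1 - ⇑w'.1) 1 (volume : Measure ℝ) := by
    have h1 : (⇑(phi lam H w).1 - ⇑(phi lam H w').1 : ℝ → ℝ) =ᵐ[(volume : Measure ℝ)]
        fun t => lam ^ (H - 1) * ((⇑w.1 - ⇑w'.1 : ℝ → ℝ) (t / lam)) := by
      filter_upwards [phi_coe hlam H w, phi_coe hlam H w'] with t h1 h2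
      simp only [Pi.sub_apply, h1, h2]
      ring
    rw [eLpNorm_congr_ae h1, eLpNorm_one_eq_lintegral_enorm,
      eLpNorm_one_eq_lintegral_enorm]
    have h2 : ∀ t : ℝ, ‖lam ^ (H - 1) * ((⇑w.1 - ⇑w'.1 : ℝ → ℝ) (t / lam))‖ₑ
        = ‖lam ^ (H - 1)‖ₑ * ‖(⇑w.1 - ⇑w'.1 : ℝ → ℝ) (t / lam)‖ₑ := by
      intro t; rw [enorm_mul]
    simp_rw [h2]
    rw [lintegral_const_mul' _ _ enorm_ne_top,
      lintegral_scale hlam _ hD.enorm]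
    rw [← mul_assoc, Real.enorm_eq_ofReal hc.le, ← ENNReal.ofReal_mul hc.le]
  rw [Subtype.dist_eq, Subtype.dist_eq, Lp.dist_def, Lp.dist_def, key,
    ENNReal.toReal_mul, ENNReal.toReal_ofReal (by positivity)]

lemma phi_continuous {lam : ℝ} (hlam : 0 < lam) (H : ℝ) :
    Continuous (phi lam H) := by
  refine LipschitzWith.continuous (K := (lam ^ (H - 1) * lam).toNNReal)
    (LipschitzWith.of_dist_le_mul fun w w' => ?_)
  rw [phi_dist hlam H, Real.coe_toNNReal _ (by positivity)]

lemma phi_measurable {lam : ℝ} (hlam : 0 < lam) (H : ℝ) :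
    Measurable (phi lam H) := (phi_continuous hlam H).measurable

lemma phi_phi {lam : ℝ} (hlam : 0 < lam) (H : ℝ) (w : WW) :
    phi lam H (phi lam⁻¹ H w) = w := by
  apply Subtype.ext; apply Lp.ext
  have h1 := phi_coe hlam H (phi lam⁻¹ H w)
  have h2 := (qmp_div hlam.ne').ae_eq (phi_coe (inv_pos.mpr hlam) H w)
  filter_upwards [h1, h2] with t ht1 ht2
  rw [ht1]
  simp only [Function.comp_apply] at ht2
  rw [ht2]
  have ht3 : t / lam / lam⁻¹ = t := by field_simp
  rw [ht3, ← mul_assoc, ← Real.mul_rpow hlam.le (inv_pos.mpr hlam).le,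
    mul_inv_cancel₀ hlam.ne', Real.one_rpow, one_mul]

end S15
namespace S15

lemma smul_ac {α : Type*} [MeasurableSpace α] (c : ℝ≥0∞) (μ : Measure α) :
    c • μ ≪ μ := by
  intro s hs
  simp [hs]

lemma map_phi {lam γ H : ℝ} {ν : Measure WW} (hscal : ScalingMeasure ν γ H)
    (hlam : 0 < lam) :
    Measure.map (phi lam H) ν = ENNReal.ofReal (lam ^ (1 + γ)) • ν := by
  ext B hB
  rw [Measure.map_apply (phi_measurable hlam H) hB, Measure.smul_apply, smul_eq_mul]
  have himg : phi lam H '' (phi lam H ⁻¹' B) = B := by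
    apply Set.Subset.antisymm (Set.image_preimage_subset _ _)
    intro v hv
    exact ⟨phi lam⁻¹ H v, by rw [Set.mem_preimage, phi_phi hlam H v]; exact hv,
      phi_phi hlam H v⟩
  have h := hscal lam hlam (phi lam H ⁻¹' B) ((phi_measurable hlam H) hB)
  rw [himg] at h
  exact h.symm

lemma sigmaFinite_ofReal_smul {α : Type*} [MeasurableSpace α] (μ : Measure α)
    [SigmaFinite μ] (r : ℝ) : SigmaFinite (ENNReal.ofReal r • μ) := by
  have h : (Real.toNNReal r) • μ = ENNReal.ofReal r • μ := by
    ext s hs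
    simp only [Measure.smul_apply, ENNReal.smul_def, ENNReal.ofReal]
  exact h ▸ SMul.sigmaFinite (μ := μ) (Real.toNNReal r)

lemma smul_prod_smul {α β : Type*} [MeasurableSpace α] [MeasurableSpace β]
    (μ : Measure α) (ν : Measure β) [SigmaFinite μ] [SigmaFinite ν] {a b : ℝ}
    (ha : 0 ≤ a) :
    (ENNReal.ofReal a • μ).prod (ENNReal.ofReal b • ν)
      = ENNReal.ofReal (a * b) • (μ.prod ν) := by
  haveI := sigmaFinite_ofReal_smul μ a
  haveI := sigmaFinite_ofReal_smul ν b
  refine Measure.prod_eq fun s t hs ht => ?_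
  simp only [Measure.smul_apply, Measure.prod_prod, smul_eq_mul,
    ENNReal.ofReal_mul ha]
  ring

/-- The rescaling map on `ℝ × 𝕎`. -/
noncomputable def Tmap (lam H : ℝ) : ℝ × WW → ℝ × WW := fun p => (lam * p.1, phi lam H p.2)

lemma Tmap_measurable {lam : ℝ} (hlam : 0 < lam) (H : ℝ) :
    Measurable (Tmap lam H) :=
  ((measurable_const_mul lam).comp measurable_fst).prodMk
    ((phi_measurable hlam H).comp measurable_snd)

lemma map_T {lam γ H : ℝ} {ν : Measure WW} [SigmaFinite ν]
    (hscal : ScalingMeasure ν γ H) (hlam : 0 < lam) :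
    Measure.map (Tmap lam H) ((volume : Measure ℝ).prod ν)
      = ENNReal.ofReal (lam ^ γ) • ((volume : Measure ℝ).prod ν) := by
  have h1 : Measure.map (fun u : ℝ => lam * u) volume
      = ENNReal.ofReal lam⁻¹ • (volume : Measure ℝ) := by
    rw [show (fun u : ℝ => lam * u) = (lam * ·) from rfl,
      Real.map_volume_mul_left hlam.ne', abs_of_pos (inv_pos.mpr hlam)]
  have h2 := map_phi hscal (γ := γ) hlam
  have hTm : Tmap lam H = Prod.map (fun u : ℝ => lam * u) (phi lam H) := rfl
  rw [hTm, ← Measure.map_prod_map _ _ (measurable_const_mul lam)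
      (phi_measurable hlam H), h1, h2]
  rw [smul_prod_smul volume ν (inv_pos.mpr hlam).le]
  congr 1
  rw [Real.rpow_add hlam, Real.rpow_one, ← mul_assoc, inv_mul_cancel₀ hlam.ne',
    one_mul]

end S15
namespace S15

variable {lam γ H : ℝ} {ν : Measure WW} [SigmaFinite ν]

lemma integral_T {E : Type*} [NormedAddCommGroup E] [NormedSpace ℝ E]
    (hscal : ScalingMeasure ν γ H) (hlam : 0 < lam) {f : ℝ × WW → E}
    (hf : AEStronglyMeasurable f ((volume : Measure ℝ).prod ν)) :
    ∫ p, f (Tmap lam H p) ∂((volume : Measure ℝ).prod ν)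
      = (lam ^ γ) • ∫ p, f p ∂((volume : Measure ℝ).prod ν) := by
  have hT := Tmap_measurable hlam H
  have hf' : AEStronglyMeasurable f
      (Measure.map (Tmap lam H) ((volume : Measure ℝ).prod ν)) := by
    rw [map_T hscal hlam]; exact hf.mono_ac (smul_ac _ _)
  rw [← integral_map hT.aemeasurable hf', map_T hscal hlam,
    integral_smul_measure, ENNReal.toReal_ofReal (Real.rpow_nonneg hlam.le _)]

lemma integrable_T_iff {E : Type*} [NormedAddCommGroup E]
    (hscal : ScalingMeasure ν γ H) (hlam : 0 < lam) {f : ℝ × WW → E}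
    (hf : AEStronglyMeasurable f ((volume : Measure ℝ).prod ν)) :
    Integrable (fun p => f (Tmap lam H p)) ((volume : Measure ℝ).prod ν)
      ↔ Integrable f ((volume : Measure ℝ).prod ν) := by
  have hT := Tmap_measurable hlam H
  have hf' : AEStronglyMeasurable f
      (Measure.map (Tmap lam H) ((volume : Measure ℝ).prod ν)) := by
    rw [map_T hscal hlam]; exact hf.mono_ac (smul_ac _ _)
  rw [show (fun p => f (Tmap lam H p)) = f ∘ Tmap lam H from rfl,
    ← integrable_map_measure hf' hT.aemeasurable, map_T hscal hlam,
    integrable_smul_measure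
      (ENNReal.ofReal_pos.mpr (Real.rpow_pos_of_pos hlam _)).ne'
      ENNReal.ofReal_ne_top]

end S15
namespace S15

/-- The kernel `K_c(u,w) = ∫_0^c w(t-u) dt`. -/
noncomputable def Kker (c : ℝ) (p : ℝ × WW) : ℝ :=
  ∫ t in (0:ℝ)..c, (p.2.1 : ℝ → ℝ) (t - p.1)

lemma kker_T {lam : ℝ} (hlam : 0 < lam) (H c u : ℝ) (w : WW) :
    Kker (lam * c) (lam * u, phi lam H w) = lam ^ H * Kker c (u, w) := by
  unfold Kker
  simp only
  have h1 : ∀ᵐ t ∂(volume : Measure ℝ),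
      ((phi lam H w).1 : ℝ → ℝ) (t - lam * u)
        = lam ^ (H - 1) * (w.1 : ℝ → ℝ) ((t - lam * u) / lam) := by
    have hq : Measure.QuasiMeasurePreserving (fun t : ℝ => t - lam * u)
        (volume : Measure ℝ) (volume : Measure ℝ) :=
      (measurePreserving_sub_right (volume : Measure ℝ) (lam * u)).quasiMeasurePreserving
    exact hq.ae_eq (phi_coe hlam H w)
  rw [intervalIntegral.integral_congr_ae (h1.mono fun t ht _ => ht)]
  have h2 : ∀ t : ℝ, (t - lam * u) / lam = t / lam - u := by
    intro t; field_simp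
  simp_rw [h2]
  rw [intervalIntegral.integral_const_mul,
    intervalIntegral.integral_comp_div (f := fun s => (w.1 : ℝ → ℝ) (s - u)) hlam.ne',
    zero_div, mul_div_cancel_left₀ _ hlam.ne', smul_eq_mul, ← mul_assoc]
  congr 1
  rw [show lam ^ (H - 1) * lam = lam ^ (H - 1) * lam ^ (1:ℝ) by rw [Real.rpow_one],
    ← Real.rpow_add hlam, sub_add_cancel]

lemma lipschitz_intervalIntegral (p q : ℝ) :
    LipschitzWith 1 (fun w : WW => ∫ x in p..q, (w.1 : ℝ → ℝ) x) := by
  refine LipschitzWith.of_dist_le_mul fun w w' => ?_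
  rw [NNReal.coe_one, one_mul, Real.dist_eq]
  have hint : ∀ v : WW, IntervalIntegrable (v.1 : ℝ → ℝ) volume p q :=
    fun v => (L1.integrable_coeFn v.1).intervalIntegrable
  rw [← intervalIntegral.integral_sub (hint w) (hint w')]
  have hD : Integrable (fun x => (w.1 : ℝ → ℝ) x - (w'.1 : ℝ → ℝ) x)
      (volume : Measure ℝ) :=
    (L1.integrable_coeFn w.1).sub (L1.integrable_coeFn w'.1)
  rw [← Real.norm_eq_abs]
  calc ‖∫ x in p..q, ((w.1 : ℝ → ℝ) x - (w'.1 : ℝ → ℝ) x)‖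
      ≤ ∫ x in Set.uIoc p q, ‖(w.1 : ℝ → ℝ) x - (w'.1 : ℝ → ℝ) x‖ :=
        intervalIntegral.norm_integral_le_integral_norm_uIoc
    _ ≤ ∫ x, ‖(w.1 : ℝ → ℝ) x - (w'.1 : ℝ → ℝ) x‖ :=
        setIntegral_le_integral hD.norm
          (Filter.Eventually.of_forall fun x => norm_nonneg _)
    _ = dist w w' := by
        rw [Subtype.dist_eq, dist_eq_norm, L1.norm_eq_integral_norm]
        refine (integral_congr_ae ?_).symm
        filter_upwards [Lp.coeFn_sub w.1 w'.1] with t ht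
        rw [ht, Pi.sub_apply]

lemma continuous_kker_right (c : ℝ) (w : WW) :
    Continuous fun a : ℝ => ∫ t in (0:ℝ)..c, (w.1 : ℝ → ℝ) (t - a) := by
  have h : ∀ a : ℝ, ∫ t in (0:ℝ)..c, (w.1 : ℝ → ℝ) (t - a)
      = (∫ t in (0:ℝ)..(c - a), (w.1 : ℝ → ℝ) t)
        - ∫ t in (0:ℝ)..(0 - a), (w.1 : ℝ → ℝ) t := by
    intro a
    rw [intervalIntegral.integral_comp_sub_right _ a]
    have hint : ∀ p q : ℝ, IntervalIntegrable (w.1 : ℝ → ℝ) volume p q :=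
      fun p q => (L1.integrable_coeFn w.1).intervalIntegrable
    rw [eq_sub_iff_add_eq, add_comm,
      intervalIntegral.integral_add_adjacent_intervals (hint _ _) (hint _ _)]
  simp_rw [h]
  have hcont := (L1.integrable_coeFn w.1).continuous_primitive (0:ℝ)
  exact (hcont.comp (continuous_const.sub continuous_id)).sub
    (hcont.comp (continuous_const.sub continuous_id))

lemma stronglyMeasurable_kker (c : ℝ) : StronglyMeasurable (Kker c) := by
  have hmeas : ∀ a : ℝ,
      StronglyMeasurable fun w : WW => ∫ t in (0:ℝ)..c, (w.1 : ℝ → ℝ) (t - a) := by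
    intro a
    have heq : (fun w : WW => ∫ t in (0:ℝ)..c, (w.1 : ℝ → ℝ) (t - a))
        = fun w : WW => ∫ x in (0 - a)..(c - a), (w.1 : ℝ → ℝ) x := by
      funext w
      rw [intervalIntegral.integral_comp_sub_right _ a]
    rw [heq]
    exact (lipschitz_intervalIntegral _ _).continuous.stronglyMeasurable
  exact stronglyMeasurable_uncurry_of_continuous_of_stronglyMeasurable
    (u := fun (a : ℝ) (w : WW) => ∫ t in (0:ℝ)..c, (w.1 : ℝ → ℝ) (t - a))
    (fun w => continuous_kker_right c w) hmeas

end S15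
namespace S15

lemma continuous_Psi : Continuous Psi := by
  unfold Psi
  exact ((Complex.continuous_exp.comp
    (Complex.continuous_ofReal.mul continuous_const)).sub continuous_const).sub
    (Complex.continuous_ofReal.mul continuous_const)

lemma abs_zI (z : ℝ) : ‖(z:ℂ) * Complex.I‖ = |z| := by
  rw [norm_mul, Complex.norm_I, Complex.norm_real, Real.norm_eq_abs, mul_one]

lemma psi_bound (z : ℝ) : ‖Psi z‖ ≤ 3 * z ^ 2 := by
  rcases le_or_gt |z| 1 with hz | hz
  · have h := Complex.norm_exp_sub_one_sub_id_le (x := (z:ℂ) * Complex.I)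
      (by rw [abs_zI]; exact hz)
    rw [Psi]
    calc ‖Complex.exp ((z:ℂ) * Complex.I) - 1 - (z:ℂ) * Complex.I‖
        ≤ ‖(z:ℂ) * Complex.I‖ ^ 2 := h
      _ = z ^ 2 := by rw [abs_zI, sq_abs]
      _ ≤ 3 * z ^ 2 := by nlinarith [sq_nonneg z]
  · have h1 : ‖Psi z‖ ≤ 1 + 1 + |z| := by
      rw [Psi]
      refine le_trans (norm_sub_le _ _) ?_
      gcongr
      · refine le_trans (norm_sub_le _ _) ?_
        gcongr
        · rw [Complex.norm_exp]
          simp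
        · simp
      · rw [abs_zI]
    have h2 : 1 ≤ |z| := hz.le
    have h3 : |z| ≤ z ^ 2 := by nlinarith [sq_abs z]
    nlinarith [sq_abs z]

lemma psi_cubic {z : ℝ} (hz : |z| ≤ 1) :
    ‖Psi z + ((z:ℂ))^2 / 2‖ ≤ |z| ^ 3 := by
  have hx : ‖(z:ℂ) * Complex.I‖ ≤ 1 := by rw [abs_zI]; exact hz
  have h := Complex.exp_bound hx (n := 3) (by norm_num)
  have hsum : ∑ m ∈ Finset.range 3, ((z:ℂ) * Complex.I) ^ m / m.factorial
      = 1 + (z:ℂ) * Complex.I + ((z:ℂ) * Complex.I) ^ 2 / 2 := by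
    simp [Finset.sum_range_succ, Nat.factorial]
  have heq : Complex.exp ((z:ℂ) * Complex.I)
        - ∑ m ∈ Finset.range 3, ((z:ℂ) * Complex.I) ^ m / m.factorial
      = Psi z + ((z:ℂ))^2 / 2 := by
    rw [hsum, Psi]
    have : ((z:ℂ) * Complex.I) ^ 2 = -((z:ℂ))^2 := by
      rw [mul_pow, Complex.I_sq, mul_neg_one]
    rw [this]
    ring
  rw [← heq]
  calc ‖_‖ ≤ ‖(z:ℂ) * Complex.I‖ ^ 3
        * ((3 + 1 : ℕ) * ((Nat.factorial 3 * 3 : ℕ) : ℝ)⁻¹) := by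
        simpa using h
    _ ≤ |z| ^ 3 := by
        rw [abs_zI]
        have : ((3 + 1 : ℕ) * ((Nat.factorial 3 * 3 : ℕ) : ℝ)⁻¹ : ℝ) = 4 / 18 := by
          norm_num [Nat.factorial]
        rw [this]
        nlinarith [abs_nonneg z, pow_nonneg (abs_nonneg z) 3]

lemma tendsto_rpow_zero {c : ℝ} (hc : 0 < c) :
    Filter.Tendsto (fun l : ℝ => l ^ c) (nhdsWithin 0 (Set.Ioi 0)) (nhds 0) := by
  have h := (Real.continuousAt_rpow_const 0 c (Or.inr hc.le)).tendsto
  rw [Real.zero_rpow hc.ne'] at h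
  exact h.mono_left nhdsWithin_le_nhds

end S15
namespace S15

lemma rpow_sq_alg {lam : ℝ} (hlam : 0 < lam) (γ : ℝ) :
    lam ^ (-γ) * (lam ^ (γ/2)) ^ 2 = 1 := by
  rw [← Real.rpow_natCast (lam ^ (γ/2)) 2, ← Real.rpow_mul hlam.le,
    ← Real.rpow_add hlam]
  norm_num

lemma rpow_cube_alg {lam : ℝ} (hlam : 0 < lam) (γ : ℝ) :
    lam ^ (-γ) * (lam ^ (γ/2)) ^ 3 = lam ^ (γ/2) := by
  rw [← Real.rpow_natCast (lam ^ (γ/2)) 3, ← Real.rpow_mul hlam.le,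
    ← Real.rpow_add hlam]
  norm_num
  ring_nf

lemma F_tendsto {γ : ℝ} (hγ : 0 < γ) (A : ℝ) :
    Filter.Tendsto (fun lam : ℝ => (lam ^ (-γ) : ℝ) • Psi (A * lam ^ (γ/2)))
      (nhdsWithin 0 (Set.Ioi 0)) (nhds ((-(A^2) / 2 : ℝ) : ℂ)) := by
  set l := nhdsWithin (0:ℝ) (Set.Ioi 0)
  set c : ℂ := ((-(A^2) / 2 : ℝ) : ℂ)
  have hγ2 : 0 < γ / 2 := by linarith
  have hsmall : ∀ᶠ lam in l, |A| * lam ^ (γ/2) < 1 := by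
    have h : Filter.Tendsto (fun lam : ℝ => |A| * lam ^ (γ/2)) l (nhds 0) := by
      have := (tendsto_rpow_zero hγ2).const_mul |A|
      rwa [mul_zero] at this
    exact h.eventually_lt_const (by norm_num)
  rw [← tendsto_sub_nhds_zero_iff]
  have h0 : Filter.Tendsto (fun lam : ℝ => |A| ^ 3 * lam ^ (γ/2)) l (nhds 0) := by
    have := (tendsto_rpow_zero hγ2).const_mul (|A| ^ 3)
    rwa [mul_zero] at this
  refine squeeze_zero_norm' ?_ h0
  filter_upwards [self_mem_nhdsWithin, hsmall] with lam (hlam : lam ∈ Set.Ioi 0) hsm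
  rw [Set.mem_Ioi] at hlam
  set z : ℝ := A * lam ^ (γ/2) with hzdef
  have hrp : (0:ℝ) < lam ^ (γ/2) := Real.rpow_pos_of_pos hlam _
  have habsz : |z| = |A| * lam ^ (γ/2) := by
    rw [hzdef, abs_mul, abs_of_pos hrp]
  have hkey : (lam ^ (-γ) : ℝ) • Psi z - c
      = (lam ^ (-γ) : ℝ) • (Psi z + ((z:ℂ))^2 / 2) := by
    rw [smul_add]
    have h2 : (lam ^ (-γ) : ℝ) • (((z:ℂ))^2 / 2) = -c := by
      rw [Complex.real_smul]
      have : ((z:ℂ))^2 = ((z^2 : ℝ) : ℂ) := by push_cast; ring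
      rw [this]
      have hz2 : lam ^ (-γ) * z ^ 2 = A ^ 2 := by
        rw [hzdef, mul_pow, ← mul_assoc, mul_comm (lam ^ (-γ)) (A^2), mul_assoc,
          rpow_sq_alg hlam, mul_one]
      have : ((lam ^ (-γ) : ℝ) : ℂ) * (((z^2 : ℝ) : ℂ)) / 2
          = (((lam ^ (-γ) * z ^ 2 : ℝ) : ℂ)) / 2 := by push_cast; ring
      rw [mul_div_assoc] at *
      rw [show ((lam ^ (-γ) : ℝ) : ℂ) * (((z^2:ℝ):ℂ) / 2)
          = (((lam ^ (-γ) * z ^ 2 : ℝ):ℂ)) / 2 by push_cast; ring, hz2]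
      rw [show c = ((-(A^2) / 2 : ℝ) : ℂ) from rfl]
      push_cast
      ring
    rw [h2]
    ring
  rw [hkey, norm_smul, Real.norm_eq_abs,
    abs_of_pos (Real.rpow_pos_of_pos hlam (-γ))]
  calc lam ^ (-γ) * ‖Psi z + ((z:ℂ))^2 / 2‖
      ≤ lam ^ (-γ) * |z| ^ 3 := by
        have hz1 : |z| ≤ 1 := by rw [habsz]; exact hsm.le
        exact mul_le_mul_of_nonneg_left (psi_cubic hz1)
          (Real.rpow_pos_of_pos hlam _).le
    _ = |A| ^ 3 * lam ^ (γ/2) := by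
        rw [habsz, mul_pow, ← mul_assoc, mul_comm (lam ^ (-γ)) (|A|^3), mul_assoc,
          rpow_cube_alg hlam]

end S15

open S15

/-- local asymptotic self-similarity of `J_ν(·,1)`, characteristic-function
form. Let `γ > 0`, `γ/2 < H ≤ 1 + γ/2`, `H₁ = H - γ/2`, and let `ν` be a `(γ,H)`-scaling
σ-finite measure on `𝕎` satisfying the basic integrability condition (a) and the second
moment condition (b). Then for every `x > 0` and `θ ∈ ℝ`,
`∫_{ℝ×𝕎} Ψ(θ λ^{-H₁} ∫_0^{λx} w(t-u) dt) du ν(dw) → -(θ²/2) C_ν² x^{2H₁}` as `λ → 0+`. -/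
theorem stmt_15 (γ H : ℝ) (hγ : 0 < γ) (hH1 : γ / 2 < H) (hH2 : H ≤ 1 + γ / 2)
    (ν : Measure WW) [SigmaFinite ν] (hscal : ScalingMeasure ν γ H)
    (hcru : ∀ x : ℝ, 0 < x →
      (∫⁻ p : ℝ × WW,
        ENNReal.ofReal (min |∫ t in (0:ℝ)..x, (p.2.1 : ℝ → ℝ) (t - p.1)|
          (|∫ t in (0:ℝ)..x, (p.2.1 : ℝ → ℝ) (t - p.1)| ^ 2))
        ∂((volume : Measure ℝ).prod ν)) ≠ ⊤)
    (hmom2 : Integrable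
      (fun p : ℝ × WW => (∫ t in (0:ℝ)..1, (p.2.1 : ℝ → ℝ) (t - p.1)) ^ 2)
      ((volume : Measure ℝ).prod ν))
    (x θ : ℝ) (hx : 0 < x) :
    Tendsto (fun lam : ℝ =>
        ∫ p : ℝ × WW,
          Psi (θ * lam ^ (-(H - γ / 2)) *
            ∫ t in (0:ℝ)..(lam * x), (p.2.1 : ℝ → ℝ) (t - p.1))
          ∂((volume : Measure ℝ).prod ν))
      (nhdsWithin 0 (Set.Ioi 0))
      (nhds (((-(θ ^ 2 / 2) *
        (∫ p : ℝ × WW, (∫ t in (0:ℝ)..1, (p.2.1 : ℝ → ℝ) (t - p.1)) ^ 2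
          ∂((volume : Measure ℝ).prod ν)) * x ^ (2 * (H - γ / 2)) : ℝ) : ℂ))) := by
  set μ := (volume : Measure ℝ).prod ν with hμdef
  set C2 : ℝ := ∫ p : ℝ × WW, (∫ t in (0:ℝ)..1, (p.2.1 : ℝ → ℝ) (t - p.1)) ^ 2 ∂μ
    with hC2def
  set Y : ℝ × WW → ℝ := Kker x with hYdef
  have hYm : StronglyMeasurable Y := stronglyMeasurable_kker x
  have hY2 : StronglyMeasurable fun p => (Y p) ^ 2 := by
    simp only [pow_two]; exact hYm.mul hYm
  set f2 : ℝ × WW → ℝ := fun p => (Y p) ^ 2 with hf2def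
  have hcomp : (fun p => f2 (Tmap x H p))
      = fun p => (x ^ H) ^ 2 * (Kker 1 p) ^ 2 := by
    funext p
    have hk := kker_T hx H 1 p.1 p.2
    rw [mul_one] at hk
    show (Kker x (x * p.1, phi x H p.2)) ^ 2 = _
    rw [hk, mul_pow]
  -- integrability of Y²
  have hTx := integrable_T_iff (ν := ν) hscal hx (f := f2) hY2.aestronglyMeasurable
  have hY2int : Integrable f2 μ := by
    refine hTx.mp ?_
    have h2 : Integrable (fun p => f2 (Tmap x H p)) μ := by
      rw [hcomp]
      exact hmom2.const_mul _
    exact h2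
  -- value of ∫ Y²
  have hYint_eq : ∫ p, f2 p ∂μ = x ^ (2 * (H - γ / 2)) * C2 := by
    have hIT := integral_T (ν := ν) hscal hx (f := f2) hY2.aestronglyMeasurable
    rw [hcomp] at hIT
    rw [show (∫ p, (x ^ H) ^ 2 * (Kker 1 p) ^ 2 ∂μ)
        = (x ^ H) ^ 2 * ∫ p, (Kker 1 p) ^ 2 ∂μ from integral_const_mul _ _] at hIT
    have hC2K : (∫ p, (Kker 1 p) ^ 2 ∂μ) = C2 := rfl
    rw [hC2K, smul_eq_mul] at hIT
    have hxγ : x ^ γ ≠ 0 := (Real.rpow_pos_of_pos hx γ).ne'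
    have hpow : (x ^ H) ^ 2 = x ^ (2 * (H - γ / 2)) * x ^ γ := by
      rw [← Real.rpow_natCast (x ^ H) 2, ← Real.rpow_mul hx.le,
        ← Real.rpow_add hx]
      norm_num
      ring_nf
    rw [hpow] at hIT
    -- hIT : x ^ (2*(H-γ/2)) * x ^ γ * C2 = x ^ γ * ∫ f2
    apply mul_left_cancel₀ hxγ
    rw [← hIT]
    ring
  -- step A: congruence on Ioi 0
  have hstep : ∀ lam : ℝ, lam ∈ Set.Ioi (0:ℝ) →
      (∫ p : ℝ × WW, Psi (θ * lam ^ (-(H - γ / 2)) *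
          ∫ t in (0:ℝ)..(lam * x), (p.2.1 : ℝ → ℝ) (t - p.1)) ∂μ)
        = ∫ p : ℝ × WW, (lam ^ (-γ) : ℝ) • Psi ((θ * Y p) * lam ^ (γ / 2)) ∂μ := by
    intro lam hlam
    rw [Set.mem_Ioi] at hlam
    set g : ℝ × WW → ℂ :=
      fun p => Psi (θ * lam ^ (-(H - γ / 2)) * Kker (lam * x) p) with hgdef
    have hgm : AEStronglyMeasurable g μ :=
      (continuous_Psi.comp_stronglyMeasurable
        ((stronglyMeasurable_kker (lam * x)).const_mul _)).aestronglyMeasurable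
    have hIT := integral_T (ν := ν) hscal hlam (f := g) hgm
    have hcompg : (fun p => g (Tmap lam H p))
        = fun p => Psi ((θ * Y p) * lam ^ (γ / 2)) := by
      funext p
      show Psi (θ * lam ^ (-(H - γ / 2)) *
          Kker (lam * x) (lam * p.1, phi lam H p.2)) = _
      rw [kker_T hlam H x p.1 p.2]
      congr 1
      have hrw : lam ^ (-(H - γ / 2)) * lam ^ H = lam ^ (γ / 2) := by
        rw [← Real.rpow_add hlam]
        congr 1
        ring
      have hKp : Kker x (p.1, p.2) = Y p := by rw [hYdef]
      rw [hKp]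
      calc θ * lam ^ (-(H - γ / 2)) * (lam ^ H * Y p)
          = (θ * Y p) * (lam ^ (-(H - γ / 2)) * lam ^ H) := by ring
        _ = (θ * Y p) * lam ^ (γ / 2) := by rw [hrw]
    rw [hcompg] at hIT
    have hLHS : (∫ p : ℝ × WW, Psi (θ * lam ^ (-(H - γ / 2)) *
        ∫ t in (0:ℝ)..(lam * x), (p.2.1 : ℝ → ℝ) (t - p.1)) ∂μ)
        = ∫ p, g p ∂μ := rfl
    rw [hLHS, integral_smul, hIT, smul_smul, ← Real.rpow_add hlam,
      neg_add_cancel, Real.rpow_zero, one_smul]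
  -- DCT
  have hDCT : Tendsto
      (fun lam : ℝ => ∫ p : ℝ × WW,
        (lam ^ (-γ) : ℝ) • Psi ((θ * Y p) * lam ^ (γ / 2)) ∂μ)
      (nhdsWithin 0 (Set.Ioi 0))
      (nhds (∫ p : ℝ × WW, ((-((θ * Y p) ^ 2) / 2 : ℝ) : ℂ) ∂μ)) := by
    refine tendsto_integral_filter_of_dominated_convergence
      (bound := fun p => 3 * (θ * Y p) ^ 2) ?_ ?_ ?_ ?_
    · refine Filter.Eventually.of_forall fun lam => ?_
      exact ((continuous_Psi.comp_stronglyMeasurable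
        ((hYm.const_mul θ).mul_const (lam ^ (γ / 2)))).aestronglyMeasurable.const_smul (lam ^ (-γ)))
    · filter_upwards [self_mem_nhdsWithin] with lam hlam
      rw [Set.mem_Ioi] at hlam
      refine Filter.Eventually.of_forall fun p => ?_
      rw [norm_smul, Real.norm_eq_abs,
        abs_of_pos (Real.rpow_pos_of_pos hlam (-γ))]
      calc lam ^ (-γ) * ‖Psi ((θ * Y p) * lam ^ (γ / 2))‖
          ≤ lam ^ (-γ) * (3 * ((θ * Y p) * lam ^ (γ / 2)) ^ 2) :=
            mul_le_mul_of_nonneg_left (psi_bound _)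
              (Real.rpow_pos_of_pos hlam _).le
        _ = 3 * (θ * Y p) ^ 2 * (lam ^ (-γ) * (lam ^ (γ / 2)) ^ 2) := by ring
        _ = 3 * (θ * Y p) ^ 2 := by rw [rpow_sq_alg hlam, mul_one]
    · have heq : (fun p => 3 * (θ * Y p) ^ 2)
          = fun p => (3 * θ ^ 2) * f2 p := by
        funext p; rw [hf2def]; ring
      rw [heq]
      exact hY2int.const_mul _
    · exact Filter.Eventually.of_forall fun p => F_tendsto hγ (θ * Y p)
  -- final value
  have hval : (∫ p : ℝ × WW, ((-((θ * Y p) ^ 2) / 2 : ℝ) : ℂ) ∂μ)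
      = ((-(θ ^ 2 / 2) * C2 * x ^ (2 * (H - γ / 2)) : ℝ) : ℂ) := by
    have hco : (fun p : ℝ × WW => ((-((θ * Y p) ^ 2) / 2 : ℝ) : ℂ))
        = fun p => (RCLike.ofReal (K := ℂ) (-((θ * Y p) ^ 2) / 2)) := rfl
    rw [hco, integral_ofReal]
    show ((∫ p : ℝ × WW, -((θ * Y p) ^ 2) / 2 ∂μ : ℝ) : ℂ) = _
    congr 1
    have h1 : (fun p => -((θ * Y p) ^ 2) / 2)
        = fun p => (-(θ ^ 2) / 2) * f2 p := by
      funext p; rw [hf2def]; ring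
    rw [h1, integral_const_mul, hYint_eq]
    ring
  rw [hval] at hDCT
  exact hDCT.congr' (Filter.eventuallyEq_of_mem self_mem_nhdsWithin
    fun lam hlam => (hstep lam hlam).symm)
end
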